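/- arXiv:math/0701101 — 5 statements merged into one kernel-verified Lean document; each statement's English description precedes it below -/
import Mathlib

section
/- The R_ε-Conjecture is equivalent to the Finite R_ε-Conjecture. That is, the following are equivalent: (R_ε) for every ε > 0, every unit norm Riesz basic sequence {f_i}_{i=1}^∞ in a Hilbert space is a finite union of ε-Riesz basic sequences (i.e., ℕ admits a finite partition {A_1,…,A_r} such that each {f_i}_{i∈A_j} is an ε-Riesz basic sequence); (Finite R_ε) for all 0 < ε and 0 < A ≤ B, there is a natural number r = r(ε, A, B) such that for every n ∈ ℕ and every unit norm Riesz basic sequence {f_i}_{i=1}^n in ℓ₂ⁿ with Riesz basis bounds A, B, there is a partition {A_1,…,A_r} of {1,…,n} such that each {f_i}_{i∈A_j} is an ε-Riesz basic sequence. -/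
open Finset Function
open scoped ENNReal

/-- `f` restricted to the index set `S` is a Riesz basic sequence with lower bound `A`
and upper bound `B`. -/
def IsRieszOn {H : Type*} [NormedAddCommGroup H] [InnerProductSpace ℂ H]
    {ι : Type*} (f : ι → H) (S : Set ι) (A B : ℝ) : Prop :=
  ∀ s : Finset ι, ↑s ⊆ S → ∀ a : ι → ℂ,
    A ^ 2 * ∑ i ∈ s, ‖a i‖ ^ 2 ≤ ‖∑ i ∈ s, a i • f i‖ ^ 2 ∧
    ‖∑ i ∈ s, a i • f i‖ ^ 2 ≤ B ^ 2 * ∑ i ∈ s, ‖a i‖ ^ 2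

section helpers

variable {H K : Type*} [NormedAddCommGroup H] [InnerProductSpace ℂ H]
  [NormedAddCommGroup K] [InnerProductSpace ℂ K] {ι κ : Type*}

lemma norm_sum_eq_of_gram (f : ι → H) (g : ι → K)
    (h : ∀ i k, (inner ℂ (f i) (f k) : ℂ) = inner ℂ (g i) (g k)) (s : Finset ι) (a : ι → ℂ) :
    ‖∑ i ∈ s, a i • f i‖ = ‖∑ i ∈ s, a i • g i‖ := by
  have key : (inner ℂ (∑ i ∈ s, a i • f i) (∑ i ∈ s, a i • f i) : ℂ)
      = inner ℂ (∑ i ∈ s, a i • g i) (∑ i ∈ s, a i • g i) := by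
    rw [sum_inner, sum_inner]
    refine Finset.sum_congr rfl fun i _ => ?_
    rw [inner_sum, inner_sum]
    refine Finset.sum_congr rfl fun k _ => ?_
    rw [inner_smul_left, inner_smul_left, inner_smul_right, inner_smul_right, h]
  rw [inner_self_eq_norm_sq_to_K, inner_self_eq_norm_sq_to_K] at key
  have h2 : (‖∑ i ∈ s, a i • f i‖ : ℝ) ^ 2 = ‖∑ i ∈ s, a i • g i‖ ^ 2 := by
    exact_mod_cast key
  have h1 := congrArg Real.sqrt h2
  rwa [Real.sqrt_sq (norm_nonneg _), Real.sqrt_sq (norm_nonneg _)] at h1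

lemma isRieszOn_of_gram {f : ι → H} {g : ι → K}
    (h : ∀ i k, (inner ℂ (f i) (f k) : ℂ) = inner ℂ (g i) (g k)) {S : Set ι} {A B : ℝ}
    (hf : IsRieszOn f S A B) : IsRieszOn g S A B := by
  intro s hs a
  rw [← norm_sum_eq_of_gram f g h s a]
  exact hf s hs a

lemma IsRieszOn.comp {f : κ → H} {S : Set κ} {A B : ℝ} (h : IsRieszOn f S A B)
    (e : ι → κ) (he : Function.Injective e) : IsRieszOn (f ∘ e) (e ⁻¹' S) A B := by
  classical
  intro s hs a
  have hsub : ↑(s.image e) ⊆ S := by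
    intro k hk
    simp only [coe_image, Set.mem_image, mem_coe] at hk
    obtain ⟨i, hi, rfl⟩ := hk
    exact hs hi
  have h2 := h (s.image e) hsub (Function.extend e a 0)
  have key1 : ∑ k ∈ s.image e, Function.extend e a 0 k • f k = ∑ i ∈ s, a i • (f ∘ e) i := by
    rw [Finset.sum_image (fun i _ j _ hij => he hij)]
    exact Finset.sum_congr rfl fun i _ => by rw [he.extend_apply]; rfl
  have key2 : ∑ k ∈ s.image e, ‖Function.extend e a 0 k‖ ^ 2 = ∑ i ∈ s, ‖a i‖ ^ 2 := by
    rw [Finset.sum_image (fun i _ j _ hij => he hij)]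
    exact Finset.sum_congr rfl fun i _ => by rw [he.extend_apply]
  rwa [key1, key2] at h2

lemma sum_dite_fin {M : Type*} [AddCommMonoid M] {d n : ℕ} (hdn : d ≤ n) (F : Fin d → M) :
    ∑ j : Fin n, (if h : (j : ℕ) < d then F ⟨j, h⟩ else 0) = ∑ j : Fin d, F j := by
  set G : ℕ → M := fun m => if h : m < d then F ⟨m, h⟩ else 0 with hG
  have h1 : ∑ j : Fin n, (if h : (j : ℕ) < d then F ⟨j, h⟩ else 0) = ∑ m ∈ range n, G m :=
    Fin.sum_univ_eq_sum_range G n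
  have h2 : ∑ j : Fin d, F j = ∑ m ∈ range d, G m := by
    rw [← Fin.sum_univ_eq_sum_range G d]
    exact Finset.sum_congr rfl fun j _ => by simp [hG, j.isLt]
  rw [h1, h2]
  exact (Finset.sum_subset (Finset.range_subset_range.2 hdn)
    (fun m _ hm => dif_neg (by simpa using hm))).symm

lemma exists_euclidean_copy (n : ℕ) (f : Fin n → H) :
    ∃ g : Fin n → EuclideanSpace ℂ (Fin n),
      ∀ i k, (inner ℂ (f i) (f k) : ℂ) = inner ℂ (g i) (g k) := by
  set V := Submodule.span ℂ (Set.range f) with hV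
  haveI : FiniteDimensional ℂ V := FiniteDimensional.span_of_finite ℂ (Set.finite_range f)
  set d := Module.finrank ℂ V with hd
  have hdn : d ≤ n := by
    have := finrank_range_le_card (R := ℂ) f
    rw [Fintype.card_fin] at this
    exact this
  set b := stdOrthonormalBasis ℂ V with hb
  set v : Fin n → V := fun i => ⟨f i, Submodule.subset_span (Set.mem_range_self i)⟩ with hv
  refine ⟨fun i => WithLp.toLp 2 fun j => if h : (j : ℕ) < d then (inner ℂ (b ⟨j, h⟩) (v i) : ℂ) else 0,
    fun i k => ?_⟩
  rw [PiLp.inner_apply]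
  simp only [WithLp.ofLp_toLp]
  have key : ∀ j : Fin n,
      (inner ℂ (if h : (j : ℕ) < d then (inner ℂ (b ⟨j, h⟩) (v i) : ℂ) else 0)
        (if h : (j : ℕ) < d then (inner ℂ (b ⟨j, h⟩) (v k) : ℂ) else 0) : ℂ) =
      if h : (j : ℕ) < d then (inner ℂ (v i) (b ⟨j, h⟩) : ℂ) * inner ℂ (b ⟨j, h⟩) (v k) else 0 := by
    intro j
    by_cases h : (j : ℕ) < d
    · simp only [dif_pos h, RCLike.inner_apply, ← inner_conj_symm (v i), mul_comm]
    · simp [dif_neg h]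
  rw [Finset.sum_congr rfl fun j _ => key j, sum_dite_fin hdn
    (fun j : Fin d => (inner ℂ (v i) (b j) : ℂ) * inner ℂ (b j) (v k)),
    b.sum_inner_mul_inner]
  exact (Submodule.coe_inner V (v i) (v k)).symm

end helpers

section lpsingle
variable {α : Type*} [DecidableEq α] {E : α → Type*} [∀ i, NormedAddCommGroup (E i)]
  [∀ i, InnerProductSpace ℂ (E i)]

omit [∀ i, InnerProductSpace ℂ (E i)] in
lemma lp_single_zero (i : α) : lp.single 2 i (0 : E i) = 0 := by
  refine lp.ext (funext fun j => ?_)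
  by_cases h : j = i
  · subst h; simp [lp.single_apply_self]
  · simp [lp.single_apply_ne 2 i _ h]

omit [∀ i, InnerProductSpace ℂ (E i)] in
lemma lp_single_add (i : α) (x y : E i) :
    lp.single 2 i (x + y) = lp.single 2 i x + lp.single 2 i y := by
  refine lp.ext (funext fun j => ?_)
  by_cases h : j = i
  · subst h; simp [lp.single_apply_self]
  · simp [lp.single_apply_ne 2 i _ h]

omit [∀ i, InnerProductSpace ℂ (E i)] in
lemma lp_single_sum {ι : Type*} (i : α) (t : Finset ι) (x : ι → E i) :
    lp.single 2 i (∑ k ∈ t, x k) = ∑ k ∈ t, lp.single 2 i (x k) := by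
  classical
  induction t using Finset.induction with
  | empty => simp [lp_single_zero]
  | insert _ _ h ih => rw [Finset.sum_insert h, Finset.sum_insert h, lp_single_add, ih]

omit [∀ i, InnerProductSpace ℂ (E i)] in
lemma lp_norm_single (i : α) (x : E i) : ‖lp.single 2 i x‖ = ‖x‖ := by
  have := lp.norm_single (p := 2) (E := E) (by norm_num) i x
  simpa using this

omit [∀ i, InnerProductSpace ℂ (E i)] in
lemma lp_norm_sum_single_sq (w : ∀ i, E i) (R : Finset α) :
    ‖∑ r ∈ R, lp.single 2 r (w r)‖ ^ 2 = ∑ r ∈ R, ‖w r‖ ^ 2 := by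
  have h := lp.norm_sum_single (p := 2) (E := E) (by norm_num) w R
  have e0 : ((2 : ℝ≥0∞)).toReal = (2 : ℝ) := by simp
  have e1 : ∀ x : ℝ, x ^ (2 : ℝ) = x ^ (2 : ℕ) := fun x => by
    rw [← Real.rpow_natCast x 2]; norm_num
  rw [e0] at h
  simp only [e1] at h
  exact h

lemma lp_inner_single_single (i : α) (x y : E i) :
    (inner ℂ (lp.single 2 i x) (lp.single 2 i y) : ℂ) = inner ℂ x y := by
  rw [lp.inner_single_left, lp.single_apply_self]

end lpsingle

lemma sum_sigma_blocks {M : Type*} [AddCommMonoid M] {β : Type*} [DecidableEq β]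
    {γ : β → Type*} [∀ b, Fintype (γ b)] [∀ b, DecidableEq (γ b)]
    (t : Finset (Σ b, γ b)) (F : (Σ b, γ b) → M) :
    ∑ l ∈ t, F l = ∑ r ∈ t.image Sigma.fst, ∑ i : γ r,
      (if (⟨r, i⟩ : Σ b, γ b) ∈ t then F ⟨r, i⟩ else 0) := by
  classical
  rw [← Finset.sum_sigma (t.image Sigma.fst) (fun r => (univ : Finset (γ r)))
    (fun l => if l ∈ t then F l else 0)]
  have hsub : t ⊆ (t.image Sigma.fst).sigma (fun r => (univ : Finset (γ r))) := by
    intro l hl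
    rw [Finset.mem_sigma]
    exact ⟨Finset.mem_image_of_mem _ hl, Finset.mem_univ _⟩
  rw [← Finset.sum_subset hsub (fun l _ hl => if_neg hl)]
  exact Finset.sum_congr rfl fun l hl => (if_pos hl).symm

lemma sum_attachFin {M : Type*} [AddCommMonoid M] {n : ℕ} (s : Finset ℕ)
    (h : ∀ m ∈ s, m < n) (F : ℕ → M) :
    ∑ i ∈ s.attachFin h, F (i : ℕ) = ∑ i ∈ s, F i := by
  refine Finset.sum_bij (fun i _ => (i : ℕ)) ?_ ?_ ?_ ?_
  · intro i hi; exact (Finset.mem_attachFin h).1 hi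
  · intro i hi j hj hij; exact Fin.val_injective hij
  · intro i hi; exact ⟨⟨i, h i hi⟩, (Finset.mem_attachFin h).2 hi, rfl⟩
  · intro i hi; rfl

section combined

noncomputable def Gfam (n : ℕ → ℕ) (f : ∀ r, Fin (n r) → EuclideanSpace ℂ (Fin (n r)))
    (l : Σ r, Fin (n r)) : lp (fun r => EuclideanSpace ℂ (Fin (n r))) 2 :=
  lp.single 2 l.1 (f l.1 l.2)

lemma G_blockify {n : ℕ → ℕ} (f : ∀ r, Fin (n r) → EuclideanSpace ℂ (Fin (n r)))
    (t : Finset (Σ r, Fin (n r))) (b : (Σ r, Fin (n r)) → ℂ) :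
    ∑ l ∈ t, b l • Gfam n f l
      = ∑ r ∈ t.image Sigma.fst, lp.single 2 r
          (∑ i : Fin (n r),
            (if (⟨r, i⟩ : Σ r, Fin (n r)) ∈ t then b ⟨r, i⟩ else 0) • f r i) := by
  classical
  rw [sum_sigma_blocks t (fun l => b l • Gfam n f l)]
  refine Finset.sum_congr rfl fun r _ => ?_
  rw [lp_single_sum]
  refine Finset.sum_congr rfl fun i _ => ?_
  by_cases h : (⟨r, i⟩ : Σ r, Fin (n r)) ∈ t
  · rw [if_pos h, if_pos h, lp.single_smul]; rfl
  · rw [if_neg h, if_neg h, zero_smul, lp_single_zero]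

lemma G_riesz {n : ℕ → ℕ} {A B : ℝ} (f : ∀ r, Fin (n r) → EuclideanSpace ℂ (Fin (n r)))
    (hf : ∀ r, IsRieszOn (f r) Set.univ A B) :
    IsRieszOn (Gfam n f) Set.univ A B := by
  classical
  intro t _ b
  set b' : (Σ r, Fin (n r)) → ℂ := fun l => if l ∈ t then b l else 0 with hb'
  set w : ∀ r, EuclideanSpace ℂ (Fin (n r)) :=
    fun r => ∑ i : Fin (n r), b' ⟨r, i⟩ • f r i with hw
  have hnorm : ‖∑ l ∈ t, b l • Gfam n f l‖ ^ 2 = ∑ r ∈ t.image Sigma.fst, ‖w r‖ ^ 2 := by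
    rw [G_blockify f t b]
    exact lp_norm_sum_single_sq w (t.image Sigma.fst)
  have hcoef : ∑ l ∈ t, ‖b l‖ ^ 2
      = ∑ r ∈ t.image Sigma.fst, ∑ i : Fin (n r), ‖b' ⟨r, i⟩‖ ^ 2 := by
    rw [sum_sigma_blocks t (fun l => ‖b l‖ ^ 2)]
    refine Finset.sum_congr rfl fun r _ => Finset.sum_congr rfl fun i _ => ?_
    by_cases h : (⟨r, i⟩ : Σ r, Fin (n r)) ∈ t <;> simp [hb', h]
  constructor
  · rw [hnorm, hcoef, Finset.mul_sum]
    refine Finset.sum_le_sum fun r _ => ?_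
    exact ((hf r) Finset.univ (by simp) (fun i => b' ⟨r, i⟩)).1
  · rw [hnorm, hcoef, Finset.mul_sum]
    refine Finset.sum_le_sum fun r _ => ?_
    exact ((hf r) Finset.univ (by simp) (fun i => b' ⟨r, i⟩)).2

end combined


universe u

noncomputable instance ULift.innerProductSpace {E : Type*} [NormedAddCommGroup E]
    [InnerProductSpace ℂ E] : InnerProductSpace ℂ (ULift.{u} E) where
  inner x y := inner ℂ x.down y.down
  norm_sq_eq_re_inner x := InnerProductSpace.norm_sq_eq_re_inner (𝕜 := ℂ) x.down
  conj_inner_symm x y := inner_conj_symm x.down y.down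
  add_left x y z := inner_add_left x.down y.down z.down
  smul_left x y r := inner_smul_left x.down y.down r

set_option maxHeartbeats 2000000 in
/-- The `R_ε`-Conjecture is equivalent to the Finite `R_ε`-Conjecture. -/
theorem R_epsilon_iff_finite_R_epsilon :
    -- the `R_ε`-Conjecture
    (∀ ε : ℝ, 0 < ε →
      ∀ (H : Type*) (_ : NormedAddCommGroup H) (_ : InnerProductSpace ℂ H)
        (_ : CompleteSpace H), ∀ f : ℕ → H, (∀ i, ‖f i‖ = 1) →
        (∃ A B : ℝ, 0 < A ∧ A ≤ B ∧ IsRieszOn f Set.univ A B) →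
        ∃ r : ℕ, ∃ c : ℕ → Fin r, ∀ j : Fin r,
          IsRieszOn f {i | c i = j} (1 - ε) (1 + ε))
    ↔
    -- the Finite `R_ε`-Conjecture
    (∀ ε A B : ℝ, 0 < ε → 0 < A → A ≤ B → ∃ r : ℕ, ∀ n : ℕ,
      ∀ f : Fin n → EuclideanSpace ℂ (Fin n), (∀ i, ‖f i‖ = 1) →
      IsRieszOn f Set.univ A B →
      ∃ c : Fin n → Fin r, ∀ j : Fin r,
        IsRieszOn f {i | c i = j} (1 - ε) (1 + ε)) := by
  constructor
  · -- infinite implies finite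
    intro hR ε A B hε hA hAB
    by_contra hcon
    push_neg at hcon
    choose nn ff hu hriesz hbad using hcon
    have hpos : ∀ r, 0 < nn r := by
      intro r
      by_contra h
      have h0 : nn r = 0 := Nat.le_zero.mp (not_lt.mp h)
      haveI : IsEmpty (Fin (nn r)) := by rw [h0]; exact Fin.isEmpty
      obtain ⟨j, hj⟩ := hbad r (fun i => isEmptyElim i)
      apply hj
      intro s hs a
      have hse : s = ∅ := Finset.eq_empty_of_isEmpty s
      rw [hse]
      simp
    haveI : Infinite (Σ r, Fin (nn r)) :=
      Infinite.of_injective (fun r : ℕ => (⟨r, ⟨0, hpos r⟩⟩ : Σ r, Fin (nn r)))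
        (fun a b h => congrArg Sigma.fst h)
    obtain ⟨_⟩ := nonempty_denumerable (Σ r, Fin (nn r))
    let e : ℕ ≃ (Σ r, Fin (nn r)) := (Denumerable.eqv (Σ r, Fin (nn r))).symm
    let F : ℕ → ULift.{u_1} (lp (fun r => EuclideanSpace ℂ (Fin (nn r))) 2) :=
      fun k => ULift.up (Gfam nn ff (e k))
    have hGR : IsRieszOn (Gfam nn ff) Set.univ A B := G_riesz ff hriesz
    have hgramF : ∀ i k : ℕ,
        (inner ℂ ((Gfam nn ff ∘ e) i) ((Gfam nn ff ∘ e) k) : ℂ) = inner ℂ (F i) (F k) :=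
      fun i k => rfl
    have hFR : IsRieszOn F Set.univ A B := by
      have h2 := hGR.comp e e.injective
      rw [Set.preimage_univ] at h2
      exact isRieszOn_of_gram hgramF h2
    have hFu : ∀ k, ‖F k‖ = 1 := by
      intro k
      have h1 : ‖F k‖ = ‖Gfam nn ff (e k)‖ := rfl
      have h2 : ‖Gfam nn ff (e k)‖ = ‖ff (e k).1 (e k).2‖ :=
        lp_norm_single (E := fun r => EuclideanSpace ℂ (Fin (nn r))) (e k).1 (ff (e k).1 (e k).2)
      rw [h1, h2]
      exact hu _ _
    obtain ⟨R, c, hcol⟩ := hR ε hε (ULift.{u_1} (lp (fun r => EuclideanSpace ℂ (Fin (nn r))) 2))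
      inferInstance inferInstance inferInstance F hFu ⟨A, B, hA, hAB, hFR⟩
    obtain ⟨j, hj⟩ := hbad R (fun i => c (e.symm ⟨R, i⟩))
    apply hj
    have hinj : Function.Injective (fun i : Fin (nn R) => e.symm (⟨R, i⟩ : Σ r, Fin (nn r))) :=
      e.symm.injective.comp sigma_mk_injective
    have hcomp := (hcol j).comp (fun i : Fin (nn R) => e.symm ⟨R, i⟩) hinj
    have hgram : ∀ i k : Fin (nn R),
        (inner ℂ ((F ∘ fun i : Fin (nn R) => e.symm ⟨R, i⟩) i)
          ((F ∘ fun i : Fin (nn R) => e.symm ⟨R, i⟩) k) : ℂ) = inner ℂ (ff R i) (ff R k) := by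
      have hFe : ∀ i : Fin (nn R),
          (F ∘ fun i : Fin (nn R) => e.symm ⟨R, i⟩) i
            = ULift.up (lp.single 2 R (ff R i)) := by
        intro i
        show ULift.up (Gfam nn ff (e (e.symm ⟨R, i⟩))) = _
        rw [e.apply_symm_apply]
        rfl
      intro i k
      rw [hFe, hFe]
      exact lp_inner_single_single (E := fun r => EuclideanSpace ℂ (Fin (nn r))) R
        (ff R i) (ff R k)
    exact isRieszOn_of_gram hgram hcomp
  · -- finite implies infinite
    intro hFin ε hε H _ _ _ f hunit hex
    obtain ⟨A, B, hA, hAB, hf⟩ := hex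
    obtain ⟨r, hr⟩ := hFin ε A B hε hA hAB
    have hstep : ∀ n : ℕ, ∃ c : Fin n → Fin r, ∀ j : Fin r,
        IsRieszOn (fun i : Fin n => f (i : ℕ)) {i | c i = j} (1 - ε) (1 + ε) := by
      intro n
      obtain ⟨g, hg⟩ := exists_euclidean_copy n (fun i : Fin n => f (i : ℕ))
      have hfres : IsRieszOn (fun i : Fin n => f (i : ℕ)) Set.univ A B := by
        have h2 := hf.comp (fun i : Fin n => (i : ℕ)) Fin.val_injective
        rwa [Set.preimage_univ] at h2
      have hgR : IsRieszOn g Set.univ A B := isRieszOn_of_gram hg hfres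
      have hgu : ∀ i, ‖g i‖ = 1 := by
        intro i
        have h2 := norm_sum_eq_of_gram _ _ hg {i} (fun _ => 1)
        simp only [Finset.sum_singleton, one_smul] at h2
        rw [← h2]
        exact hunit i
      obtain ⟨c, hc⟩ := hr n g hgu hgR
      exact ⟨c, fun j => isRieszOn_of_gram (fun i k => (hg i k).symm) (hc j)⟩
    choose cn hcn using hstep
    have hr0 : 0 < r := by
      refine Nat.pos_of_ne_zero fun h0 => ?_
      exact Fin.elim0 (h0 ▸ cn 1 ⟨0, Nat.one_pos⟩)
    set U := Filter.hyperfilter ℕ with hU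
    set ch : ℕ → ℕ → Fin r := fun N m => if h : m < N then cn N ⟨m, h⟩ else ⟨0, hr0⟩ with hch
    have hlim : ∀ i : ℕ, ∃ v : Fin r, ∀ᶠ N in (U : Filter ℕ), ch N i = v := by
      intro i
      obtain ⟨v, hv⟩ := Ultrafilter.eq_pure_of_finite (U.map (fun N => ch N i))
      refine ⟨v, ?_⟩
      have h2 : {v} ∈ U.map (fun N => ch N i) := by
        rw [hv]; exact Filter.mem_pure.mpr rfl
      have h3 : (fun N => ch N i) ⁻¹' {v} ∈ U := h2
      exact Filter.mem_of_superset h3 (fun N hN => hN)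
    choose c hc using hlim
    refine ⟨r, c, fun j => ?_⟩
    intro s hs a
    have hmem : ∀ᶠ N in (U : Filter ℕ), ∀ i ∈ s, i < N ∧ ch N i = c i := by
      rw [Filter.eventually_all_finset]
      intro i _
      exact ((Filter.eventually_gt_atTop i).filter_mono Nat.hyperfilter_le_atTop).and (hc i)
    obtain ⟨n, hn⟩ := hmem.exists
    have hlt : ∀ i ∈ s, i < n := fun i hi => (hn i hi).1
    have hsub : ↑(s.attachFin hlt) ⊆ {i : Fin n | cn n i = j} := by
      intro i' hi'
      simp only [Finset.mem_coe, Finset.mem_attachFin] at hi'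
      have h1 : ch n (i' : ℕ) = c (i' : ℕ) := (hn _ hi').2
      have h2 : c (i' : ℕ) = j := hs hi'
      have h3 : ch n (i' : ℕ) = cn n i' := by
        rw [hch]
        simp only [i'.isLt, dif_pos, Fin.eta]
      show cn n i' = j
      rw [← h3, h1, h2]
    have key := hcn n j (s.attachFin hlt) hsub (fun i' => a (i' : ℕ))
    rwa [sum_attachFin s hlt (fun m => a m • f m),
      sum_attachFin s hlt (fun m => ‖a m‖ ^ 2)] at key
end

section
/- The Finite R_ε-Conjecture implies the R_ε-Conjecture. That is, assume that for all 0 < ε and 0 < A ≤ B there is a natural number r = r(ε, A, B) such that for every n ∈ ℕ and every unit norm Riesz basic sequence {f_i}_{i=1}^n in ℓ₂ⁿ with Riesz basis bounds A, B, there is a partition {A_1,…,A_r} of {1,…,n} such that each {f_i}_{i∈A_j} is an ε-Riesz basic sequence. Then for every ε > 0, every Hilbert space H, and every unit norm Riesz basic sequence {f_i}_{i=1}^∞ in H with bounds 0 < A ≤ B, there is a finite partition {A_1,…,A_r} of ℕ such that each {f_i}_{i∈A_j} is an ε-Riesz basic sequence. -/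
lemma sum_attachFin_val {M : Type*} [AddCommMonoid M] {n : ℕ} (s : Finset ℕ)
    (hs : ∀ m ∈ s, m < n) (G : ℕ → M) :
    ∑ i ∈ s.attachFin hs, G i.val = ∑ m ∈ s, G m := by
  apply Finset.sum_bij (fun i _ => i.val)
  · intro i hi; exact (Finset.mem_attachFin hs).mp hi
  · intro i _ j _ h; exact Fin.ext h
  · intro m hm; exact ⟨⟨m, hs m hm⟩, (Finset.mem_attachFin hs).mpr hm, rfl⟩
  · intro i _; rfl

lemma exists_isometric_embedding {H : Type*} [NormedAddCommGroup H] [InnerProductSpace ℂ H]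
    (f : ℕ → H) (hli : LinearIndependent ℂ f) (n : ℕ) :
    ∃ g : Fin n → EuclideanSpace ℂ (Fin n),
      (∀ i, ‖g i‖ = ‖f i.val‖) ∧
      ∀ (s : Finset ℕ) (hs : ∀ m ∈ s, m < n) (a : ℕ → ℂ),
        ‖∑ i ∈ s.attachFin hs, a i.val • g i‖ = ‖∑ m ∈ s, a m • f m‖ := by
  set fn : Fin n → H := fun i => f i.val with hfn
  have hlin : LinearIndependent ℂ fn := hli.comp _ Fin.val_injective
  set V := Submodule.span ℂ (Set.range fn) with hV
  haveI : FiniteDimensional ℂ V := FiniteDimensional.span_of_finite ℂ (Set.finite_range fn)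
  have hdim : Module.finrank ℂ V = n := by
    rw [hV, finrank_span_eq_card hlin, Fintype.card_fin]
  let T : V ≃ₗᵢ[ℂ] EuclideanSpace ℂ (Fin n) :=
    ((stdOrthonormalBasis ℂ V).reindex (finCongr hdim)).repr
  set F : Fin n → V := fun i => ⟨fn i, Submodule.subset_span ⟨i, rfl⟩⟩ with hF
  refine ⟨fun i => T (F i), fun i => by
    rw [T.norm_map]
    simp [hF, Submodule.coe_norm, hfn], ?_⟩
  intro s hs a
  have h1 : ∑ i ∈ s.attachFin hs, a i.val • T (F i)
      = T (∑ i ∈ s.attachFin hs, a i.val • F i) := by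
    rw [map_sum]
    simp
  rw [h1, T.norm_map, Submodule.coe_norm]
  congr 1
  push_cast
  exact sum_attachFin_val s hs (fun m => a m • f m)

/-- The Finite `R_ε`-Conjecture implies the `R_ε`-Conjecture. -/
theorem finite_R_epsilon_implies_R_epsilon
    (hfin : ∀ ε A B : ℝ, 0 < ε → 0 < A → A ≤ B → ∃ r : ℕ, ∀ n : ℕ,
      ∀ f : Fin n → EuclideanSpace ℂ (Fin n), (∀ i, ‖f i‖ = 1) →
      IsRieszOn f Set.univ A B →
      ∃ c : Fin n → Fin r, ∀ j : Fin r,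
        IsRieszOn f {i | c i = j} (1 - ε) (1 + ε)) :
    ∀ ε : ℝ, 0 < ε →
      ∀ (H : Type*) (_ : NormedAddCommGroup H) (_ : InnerProductSpace ℂ H)
        (_ : CompleteSpace H), ∀ f : ℕ → H, ∀ A B : ℝ, 0 < A → A ≤ B →
        (∀ i, ‖f i‖ = 1) → IsRieszOn f Set.univ A B →
        ∃ r : ℕ, ∃ c : ℕ → Fin r, ∀ j : Fin r,
          IsRieszOn f {i | c i = j} (1 - ε) (1 + ε) := by
  intro ε hε H _ _ _ f A B hA hAB hnorm hriesz
  obtain ⟨r, hr⟩ := hfin ε A B hε hA hAB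
  -- linear independence
  have hli : LinearIndependent ℂ f := by
    rw [linearIndependent_iff'']
    intro s aa h0 hsum i
    have hle := (hriesz s (Set.subset_univ _) aa).1
    rw [hsum] at hle
    simp only [norm_zero] at hle
    have hsumz : ∑ i ∈ s, ‖aa i‖ ^ 2 ≤ 0 := by
      by_contra hpos
      push_neg at hpos
      have hm := mul_pos (pow_pos hA 2) hpos
      nlinarith
    by_cases hi : i ∈ s
    · have : ∀ j ∈ s, ‖aa j‖ ^ 2 = 0 := by
        intro j hj
        have := Finset.sum_nonneg (fun k (_ : k ∈ s) => sq_nonneg ‖aa k‖)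
        have h2 := (Finset.sum_eq_zero_iff_of_nonneg
          (fun k (_ : k ∈ s) => sq_nonneg ‖aa k‖)).mp (le_antisymm hsumz this) j hj
        exact h2
      have := this i hi
      have : ‖aa i‖ = 0 := by nlinarith [norm_nonneg (aa i)]
      simpa using this
    · exact h0 i hi
  choose g hgnorm hgsum using exists_isometric_embedding f hli
  -- colorings of initial segments
  have hcolor : ∀ n, ∃ cN : Fin n → Fin r, ∀ j,
      IsRieszOn (g n) {i | cN i = j} (1 - ε) (1 + ε) := by
    intro n
    apply hr n (g n)
    · intro i; rw [hgnorm]; exact hnorm _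
    · -- IsRieszOn (g n) univ A B
      intro s _ a
      set t := s.image Fin.val with ht
      have hts : ∀ m ∈ t, m < n := by
        intro m hm
        obtain ⟨i, _, rfl⟩ := Finset.mem_image.mp hm
        exact i.isLt
      set a' : ℕ → ℂ := fun m => if h : m < n then a ⟨m, h⟩ else 0 with ha'
      have hattach : t.attachFin hts = s := by
        ext i
        simp only [Finset.mem_attachFin, ht, Finset.mem_image]
        constructor
        · rintro ⟨j, hj, hji⟩; rwa [← Fin.ext hji]
        · intro hi; exact ⟨i, hi, rfl⟩
      have hcoef : ∀ i : Fin n, a' i.val = a i := by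
        intro i; simp [ha', i.isLt]
      have hnormeq : ‖∑ i ∈ s, a i • g n i‖ = ‖∑ m ∈ t, a' m • f m‖ := by
        rw [← hgsum n t hts a', hattach]
        congr 1
        exact Finset.sum_congr rfl (fun i _ => by rw [hcoef])
      have hsq : ∑ i ∈ s, ‖a i‖ ^ 2 = ∑ m ∈ t, ‖a' m‖ ^ 2 := by
        rw [← sum_attachFin_val t hts (fun m => ‖a' m‖ ^ 2), hattach]
        exact Finset.sum_congr rfl (fun i _ => by rw [hcoef])
      rw [hnormeq, hsq]
      exact hriesz t (Set.subset_univ _) a'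
  choose col hcol using hcolor
  set seq : ℕ → ℕ → Fin r := fun n m =>
    if h : m < n + 1 then col (n + 1) ⟨m, h⟩ else col (n + 1) ⟨0, Nat.succ_pos n⟩ with hseq
  haveI : (Filter.map seq Filter.atTop).NeBot := Filter.map_neBot
  obtain ⟨c, hc⟩ := exists_clusterPt_of_compactSpace (Filter.map seq Filter.atTop)
  refine ⟨r, c, ?_⟩
  have hkey : ∀ (F : Finset ℕ) (N : ℕ), ∃ n ≥ N, ∀ m ∈ F, seq n m = c m := by
    intro F N
    have hU : {d : ℕ → Fin r | ∀ m ∈ F, d m = c m} ∈ nhds c := by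
      have heq : {d : ℕ → Fin r | ∀ m ∈ F, d m = c m}
          = ⋂ m ∈ F, (fun d : ℕ → Fin r => d m) ⁻¹' {c m} := by
        ext d; simp
      rw [heq]
      apply (Filter.biInter_finset_mem F).mpr
      intro m _
      exact IsOpen.mem_nhds ((continuous_apply m).isOpen_preimage _ (isOpen_discrete _)) rfl
    have hV : {d : ℕ → Fin r | ∃ n ≥ N, seq n = d} ∈ Filter.map seq Filter.atTop := by
      rw [Filter.mem_map]
      apply Filter.mem_of_superset (Filter.Ici_mem_atTop N)
      intro n hn
      exact ⟨n, hn, rfl⟩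
    obtain ⟨d, hd1, n, hn, rfl⟩ := clusterPt_iff_nonempty.mp hc hU hV
    exact ⟨n, hn, hd1⟩
  intro j s hsub a
  -- pick n large enough and agreeing with c on s
  obtain ⟨n, hn, hagree⟩ := hkey s (s.sup id)
  have hslt : ∀ m ∈ s, m < n + 1 := by
    intro m hm
    have : m ≤ s.sup id := Finset.le_sup (f := id) hm
    omega
  have hmem : ↑(s.attachFin hslt) ⊆ {i : Fin (n+1) | col (n+1) i = j} := by
    intro i hi
    have hival : i.val ∈ s := (Finset.mem_attachFin hslt).mp (by exact_mod_cast hi)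
    have h1 : seq n i.val = col (n+1) i := by
      simp only [hseq]
      rw [dif_pos i.isLt]
    have h2 : seq n i.val = c i.val := hagree i.val hival
    have h3 : c i.val = j := hsub hival
    simp only [Set.mem_setOf_eq]
    rw [← h1, h2, h3]
  have hb := hcol (n+1) j (s.attachFin hslt) hmem (fun i => a i.val)
  have hne : ‖∑ i ∈ s.attachFin hslt, a i.val • g (n+1) i‖ = ‖∑ m ∈ s, a m • f m‖ :=
    hgsum (n+1) s hslt a
  have hse : ∑ i ∈ s.attachFin hslt, ‖a i.val‖ ^ 2 = ∑ m ∈ s, ‖a m‖ ^ 2 :=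
    sum_attachFin_val s hslt (fun m => ‖a m‖ ^ 2)
  rw [hne, hse] at hb
  exact hb
end

section
/- Let f_1, …, f_n be vectors in a complex Hilbert space and let r ≥ 1 be a natural number. Then there exists a partition {A_1,…,A_r} of {1,…,n} such that for every j ∈ {1,…,r}, every i ∈ A_j, and every k ∈ {1,…,r} with k ≠ j, one has ∑_{ℓ ∈ A_j, ℓ ≠ i} |⟨f_i, f_ℓ⟩|² ≤ ∑_{ℓ ∈ A_k} |⟨f_i, f_ℓ⟩|². Such a partition is obtained by choosing, among all partitions of {1,…,n} into r sets, one minimizing ∑_{j=1}^r ∑_{i ∈ A_j} ∑_{ℓ ∈ A_j, ℓ ≠ i} |⟨f_i, f_ℓ⟩|². -/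
open scoped InnerProductSpace

/-- Step 1 (following Halpern–Kaftal–Weiss): there is a partition `{A_1,…,A_r}` of
`{1,…,n}` (encoded by a coloring `c`, with `A_j = {i | c i = j}`) such that for every `j`,
every `i ∈ A_j` and every `k ≠ j`,
`∑_{ℓ ∈ A_j, ℓ ≠ i} |⟨f_i, f_ℓ⟩|² ≤ ∑_{ℓ ∈ A_k} |⟨f_i, f_ℓ⟩|²`.
Such a partition is obtained by minimizing
`∑_j ∑_{i ∈ A_j} ∑_{ℓ ∈ A_j, ℓ ≠ i} |⟨f_i, f_ℓ⟩|²` over all partitions into `r` sets. -/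
theorem exists_partition_offDiagonal_min {H : Type*} [NormedAddCommGroup H]
    [InnerProductSpace ℂ H] (n r : ℕ) (hr : 1 ≤ r) (f : Fin n → H) :
    ∃ c : Fin n → Fin r,
      (∀ c' : Fin n → Fin r,
        (∑ i, ∑ ℓ ∈ Finset.univ.filter (fun ℓ => ℓ ≠ i ∧ c ℓ = c i),
            ‖⟪f i, f ℓ⟫_ℂ‖ ^ 2) ≤
        (∑ i, ∑ ℓ ∈ Finset.univ.filter (fun ℓ => ℓ ≠ i ∧ c' ℓ = c' i),
            ‖⟪f i, f ℓ⟫_ℂ‖ ^ 2)) ∧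
      (∀ j : Fin r, ∀ i : Fin n, c i = j → ∀ k : Fin r, k ≠ j →
        ∑ ℓ ∈ Finset.univ.filter (fun ℓ => ℓ ≠ i ∧ c ℓ = j), ‖⟪f i, f ℓ⟫_ℂ‖ ^ 2 ≤
        ∑ ℓ ∈ Finset.univ.filter (fun ℓ => c ℓ = k), ‖⟪f i, f ℓ⟫_ℂ‖ ^ 2) := by
  classical
  haveI : Nonempty (Fin r) := ⟨⟨0, hr⟩⟩
  set g : Fin n → Fin n → ℝ := fun i ℓ => ‖⟪f i, f ℓ⟫_ℂ‖ ^ 2 with hg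
  have hsymm : ∀ i ℓ, g i ℓ = g ℓ i := by
    intro i ℓ
    simp only [hg]
    rw [← inner_conj_symm (f ℓ) (f i), RCLike.norm_conj]
  set E : (Fin n → Fin r) → ℝ := fun c =>
    ∑ i, ∑ ℓ ∈ Finset.univ.filter (fun ℓ => ℓ ≠ i ∧ c ℓ = c i), g i ℓ with hEdef
  obtain ⟨c, -, hmin⟩ := Finset.exists_min_image (Finset.univ : Finset (Fin n → Fin r)) E
    ⟨Classical.arbitrary _, Finset.mem_univ _⟩
  refine ⟨c, fun c' => hmin c' (Finset.mem_univ _), ?_⟩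
  intro j i₀ hci₀ k hkj
  by_contra hcon
  push_neg at hcon
  set S : Fin r → ℝ := fun m =>
    ∑ ℓ ∈ Finset.univ.filter (fun ℓ => ℓ ≠ i₀ ∧ c ℓ = m), g i₀ ℓ with hS
  have hSk : (∑ ℓ ∈ Finset.univ.filter (fun ℓ => c ℓ = k), g i₀ ℓ) = S k := by
    apply Finset.sum_congr _ (fun _ _ => rfl)
    ext ℓ
    simp only [Finset.mem_filter, Finset.mem_univ, true_and]
    constructor
    · intro h
      refine ⟨?_, h⟩
      intro he
      rw [he, hci₀] at h
      exact hkj h.symm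
    · exact And.right
  rw [hSk] at hcon
  have hconS : S k < S j := by simpa [hS, hg] using hcon
  -- hcon : S k < S j
  set c' : Fin n → Fin r := Function.update c i₀ k with hc'
  have hc'i₀ : c' i₀ = k := Function.update_self _ _ _
  have hc'ne : ∀ ℓ, ℓ ≠ i₀ → c' ℓ = c ℓ := fun ℓ h => Function.update_of_ne h _ _
  -- F d i = inner sum as an if-sum
  have hEif : ∀ d : Fin n → Fin r, E d = ∑ i, ∑ ℓ,
      (if ℓ ≠ i ∧ d ℓ = d i then g i ℓ else 0) := by
    intro d
    simp only [hEdef, Finset.sum_filter]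
  have herase : ∀ m : Fin r,
      S m = ∑ ℓ ∈ Finset.univ.erase i₀, (if c ℓ = m then g i₀ ℓ else 0) := by
    intro m
    simp only [hS]
    rw [Finset.sum_filter, ← Finset.add_sum_erase _ _ (Finset.mem_univ i₀)]
    simp only [ne_eq, not_true_eq_false, false_and, if_false, zero_add]
    apply Finset.sum_congr rfl
    intro ℓ hℓ
    have h1 := (Finset.mem_erase.mp hℓ).1
    simp [h1]
  -- inner sum at i₀
  have hF0c : (∑ ℓ, (if ℓ ≠ i₀ ∧ c ℓ = c i₀ then g i₀ ℓ else 0)) = S j := by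
    simp only [hS]
    rw [Finset.sum_filter, hci₀]
  have hF0c' : (∑ ℓ, (if ℓ ≠ i₀ ∧ c' ℓ = c' i₀ then g i₀ ℓ else 0)) = S k := by
    simp only [hS]
    rw [Finset.sum_filter, hc'i₀]
    apply Finset.sum_congr rfl
    intro ℓ _
    by_cases h : ℓ = i₀
    · simp [h]
    · simp [h, hc'ne ℓ h]
  -- inner sums at i ≠ i₀
  have hFi : ∀ d : Fin n → Fin r, ∀ i ∈ Finset.univ.erase i₀,
      (∑ ℓ, (if ℓ ≠ i ∧ d ℓ = d i then g i ℓ else 0)) =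
      (if d i₀ = d i then g i i₀ else 0) +
        ∑ ℓ ∈ Finset.univ.erase i₀, (if ℓ ≠ i ∧ d ℓ = d i then g i ℓ else 0) := by
    intro d i hi
    have hi' : i ≠ i₀ := (Finset.mem_erase.mp hi).1
    rw [← Finset.add_sum_erase _ _ (Finset.mem_univ i₀)]
    congr 1
    simp [Ne.symm hi']
  have key : E c' < E c := by
    rw [hEif c, hEif c',
      ← Finset.add_sum_erase _ _ (Finset.mem_univ i₀),
      ← Finset.add_sum_erase _ (fun i => ∑ ℓ, (if ℓ ≠ i ∧ c ℓ = c i then g i ℓ else 0))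
        (Finset.mem_univ i₀),
      hF0c, hF0c',
      Finset.sum_congr rfl (hFi c'), Finset.sum_congr rfl (hFi c),
      Finset.sum_add_distrib, Finset.sum_add_distrib]
    have htail : ∀ i ∈ Finset.univ.erase i₀,
        (∑ ℓ ∈ Finset.univ.erase i₀, (if ℓ ≠ i ∧ c' ℓ = c' i then g i ℓ else 0)) =
        ∑ ℓ ∈ Finset.univ.erase i₀, (if ℓ ≠ i ∧ c ℓ = c i then g i ℓ else 0) := by
      intro i hi
      have hi' : i ≠ i₀ := (Finset.mem_erase.mp hi).1
      apply Finset.sum_congr rfl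
      intro ℓ hℓ
      have hℓ' : ℓ ≠ i₀ := (Finset.mem_erase.mp hℓ).1
      rw [hc'ne ℓ hℓ', hc'ne i hi']
    rw [Finset.sum_congr rfl htail]
    have hheadc' : (∑ i ∈ Finset.univ.erase i₀, (if c' i₀ = c' i then g i i₀ else 0)) = S k := by
      rw [herase k]
      apply Finset.sum_congr rfl
      intro i hi
      have hi' : i ≠ i₀ := (Finset.mem_erase.mp hi).1
      rw [hc'i₀, hc'ne i hi', hsymm i i₀]
      by_cases h : c i = k
      · simp [h]
      · simp [h, Ne.symm h]
    have hheadc : (∑ i ∈ Finset.univ.erase i₀, (if c i₀ = c i then g i i₀ else 0)) = S j := by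
      rw [herase j]
      apply Finset.sum_congr rfl
      intro i hi
      rw [hci₀, hsymm i i₀]
      by_cases h : c i = j
      · simp [h]
      · simp [h, Ne.symm h]
    rw [hheadc', hheadc]
    linarith [hconS]
  exact absurd (hmin c' (Finset.mem_univ _)) (not_le.mpr key)
end

section
/- Let {f_i}_{i=1}^n be a unit norm Riesz basis for ℓ₂ⁿ with bounds 0 < A ≤ B and let r ≥ 1 be a natural number. Then there exists a partition {A_1,…,A_r} of {1,…,n} such that for every j ∈ {1,…,r} and every i ∈ A_j, one has ∑_{ℓ ∈ A_j, ℓ ≠ i} |⟨f_i, f_ℓ⟩|² ≤ B²/r. -/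
open scoped InnerProductSpace
open Finset

open Finset

lemma partition_aux {n r : ℕ} (hr : 1 ≤ r) (w : Fin n → Fin n → ℝ)
    (hw0 : ∀ i ℓ, 0 ≤ w i ℓ) (hsymm : ∀ i ℓ, w i ℓ = w ℓ i) (M : ℝ)
    (hM : ∀ i, ∑ ℓ, w i ℓ ≤ M) :
    ∃ c : Fin n → Fin r, ∀ j : Fin r, ∀ i : Fin n, c i = j →
      ∑ ℓ ∈ Finset.univ.filter (fun ℓ => ℓ ≠ i ∧ c ℓ = j), w i ℓ ≤ M / r := by
  haveI : NeZero r := ⟨by omega⟩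
  set e : (Fin n → Fin r) → Fin n → Fin n → ℝ :=
    fun c k ℓ => if k ≠ ℓ ∧ c k = c ℓ then w k ℓ else 0 with he
  set Φ : (Fin n → Fin r) → ℝ := fun c => ∑ k, ∑ ℓ, e c k ℓ with hΦ
  obtain ⟨c, -, hmin⟩ := Finset.exists_min_image Finset.univ Φ ⟨fun _ => 0, mem_univ _⟩
  set S : Fin n → Fin r → ℝ :=
    fun i k => ∑ ℓ ∈ Finset.univ.filter (fun ℓ => ℓ ≠ i ∧ c ℓ = k), w i ℓ with hS
  have hesymm : ∀ d k ℓ, e d k ℓ = e d ℓ k := by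
    intro d k ℓ
    simp only [he]
    by_cases h : k = ℓ
    · subst h; rfl
    · by_cases h2 : d k = d ℓ
      · rw [if_pos ⟨h, h2⟩, if_pos ⟨(Ne.symm h), h2.symm⟩, hsymm]
      · rw [if_neg (by tauto), if_neg (by tauto)]
  -- decomposition of Φ around index i
  have hdec : ∀ (d : Fin n → Fin r) (i : Fin n),
      Φ d = 2 * (∑ ℓ, e d i ℓ) + ∑ k ∈ univ.erase i, ∑ ℓ ∈ univ.erase i, e d k ℓ := by
    intro d i
    have h1 : Φ d = (∑ ℓ, e d i ℓ) + ∑ k ∈ univ.erase i, ∑ ℓ, e d k ℓ :=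
      (Finset.add_sum_erase _ _ (mem_univ i)).symm
    have h2 : ∀ k, (∑ ℓ, e d k ℓ) = e d k i + ∑ ℓ ∈ univ.erase i, e d k ℓ :=
      fun k => (Finset.add_sum_erase _ _ (mem_univ i)).symm
    have h3 : ∑ k ∈ univ.erase i, e d k i = ∑ ℓ, e d i ℓ := by
      rw [Finset.sum_congr rfl (fun k _ => hesymm d k i)]
      rw [← Finset.add_sum_erase univ (e d i) (mem_univ i)]
      simp [he]
    calc Φ d = (∑ ℓ, e d i ℓ) + ∑ k ∈ univ.erase i, (e d k i + ∑ ℓ ∈ univ.erase i, e d k ℓ) := by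
          rw [h1]; exact congrArg _ (Finset.sum_congr rfl fun k _ => h2 k)
      _ = (∑ ℓ, e d i ℓ) + ((∑ k ∈ univ.erase i, e d k i)
            + ∑ k ∈ univ.erase i, ∑ ℓ ∈ univ.erase i, e d k ℓ) := by rw [Finset.sum_add_distrib]
      _ = _ := by rw [h3]; ring
  have key : ∀ (i : Fin n) (j : Fin r), S i (c i) ≤ S i j := by
    intro i j
    set c' := Function.update c i j with hc'
    have hA1 : ∑ ℓ, e c i ℓ = S i (c i) := by
      simp only [hS]
      rw [Finset.sum_filter]
      refine Finset.sum_congr rfl fun ℓ _ => ?_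
      simp only [he]
      by_cases h : ℓ = i
      · subst h; simp
      · by_cases h2 : c ℓ = c i
        · rw [if_pos ⟨Ne.symm h, h2.symm⟩, if_pos ⟨h, h2⟩]
        · rw [if_neg (by tauto), if_neg (by tauto)]
    have hA2 : ∑ ℓ, e c' i ℓ = S i j := by
      simp only [hS]
      rw [Finset.sum_filter]
      refine Finset.sum_congr rfl fun ℓ _ => ?_
      simp only [he]
      by_cases h : ℓ = i
      · subst h; simp
      · have hci' : c' i = j := Function.update_self i j c
        have hcl' : c' ℓ = c ℓ := Function.update_of_ne h j c
        by_cases h2 : c ℓ = j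
        · rw [if_pos ⟨Ne.symm h, by rw [hci', hcl', h2]⟩, if_pos ⟨h, h2⟩]
        · rw [if_neg (by rw [hci', hcl']; tauto), if_neg (by tauto)]
    have hR : ∑ k ∈ univ.erase i, ∑ ℓ ∈ univ.erase i, e c' k ℓ
        = ∑ k ∈ univ.erase i, ∑ ℓ ∈ univ.erase i, e c k ℓ := by
      refine Finset.sum_congr rfl fun k hk => Finset.sum_congr rfl fun ℓ hℓ => ?_
      simp only [he, hc', Function.update_of_ne (Finset.ne_of_mem_erase hk) j c,
        Function.update_of_ne (Finset.ne_of_mem_erase hℓ) j c]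
    have hmin' := hmin c' (mem_univ _)
    rw [hdec c i, hdec c' i, hA1, hA2, hR] at hmin'
    linarith
  refine ⟨c, fun j i hij => ?_⟩
  have hsum : ∑ j' : Fin r, S i j' = ∑ ℓ ∈ univ.filter (fun ℓ => ℓ ≠ i), w i ℓ := by
    rw [← Finset.sum_fiberwise (univ.filter (fun ℓ => ℓ ≠ i)) c (w i)]
    refine Finset.sum_congr rfl fun j' _ => ?_
    rw [hS, Finset.filter_filter]
  have hle : ∑ ℓ ∈ univ.filter (fun ℓ => ℓ ≠ i), w i ℓ ≤ ∑ ℓ, w i ℓ :=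
    Finset.sum_le_sum_of_subset_of_nonneg (Finset.filter_subset _ _)
      (fun ℓ _ _ => hw0 i ℓ)
  have hrS : (r : ℝ) * S i (c i) ≤ ∑ j' : Fin r, S i j' := by
    have := Finset.card_nsmul_le_sum Finset.univ (S i) (S i (c i))
      (fun j' _ => key i j')
    simpa [nsmul_eq_mul] using this
  have hMr : (r : ℝ) * S i (c i) ≤ M := le_trans hrS (by rw [hsum]; exact le_trans hle (hM i))
  have hr' : (0 : ℝ) < r := by positivity
  show S i j ≤ M / r
  rw [← hij, le_div_iff₀ hr']
  linarith



lemma bessel_bound {n : ℕ} (f : Fin n → EuclideanSpace ℂ (Fin n)) (B : ℝ)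
    (hnorm : ∀ i, ‖f i‖ = 1)
    (hup : ∀ a : Fin n → ℂ, ‖∑ i, a i • f i‖ ^ 2 ≤ B ^ 2 * ∑ i, ‖a i‖ ^ 2)
    (i : Fin n) : ∑ ℓ, ‖⟪f i, f ℓ⟫_ℂ‖ ^ 2 ≤ B ^ 2 := by
  set a : Fin n → ℂ := fun ℓ => ⟪f ℓ, f i⟫_ℂ with ha
  set Sv := ∑ ℓ, a ℓ • f ℓ with hSv
  set X := ∑ ℓ, ‖⟪f i, f ℓ⟫_ℂ‖ ^ 2 with hX
  have hXnn : 0 ≤ X := Finset.sum_nonneg fun ℓ _ => by positivity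
  have h1 : ⟪f i, Sv⟫_ℂ = (X : ℂ) := by
    rw [hSv, inner_sum]
    simp_rw [inner_smul_right, ha]
    rw [hX]
    push_cast
    refine Finset.sum_congr rfl fun ℓ _ => ?_
    rw [← inner_conj_symm (f i) (f ℓ), RCLike.norm_conj, RCLike.mul_conj]
    norm_cast
  have h2 : X ≤ ‖Sv‖ := by
    have : ‖⟪f i, Sv⟫_ℂ‖ ≤ ‖f i‖ * ‖Sv‖ := norm_inner_le_norm _ _
    rw [h1, hnorm i, one_mul] at this
    calc X = ‖(X : ℂ)‖ := by rw [Complex.norm_real, Real.norm_of_nonneg hXnn]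
      _ ≤ ‖Sv‖ := this
  have h3 : ∑ ℓ, ‖a ℓ‖ ^ 2 = X := by
    refine Finset.sum_congr rfl fun ℓ _ => ?_
    simp only [ha]
    rw [norm_inner_symm]
  have h4 : ‖Sv‖ ^ 2 ≤ B ^ 2 * X := by
    have := hup a
    rwa [h3] at this
  nlinarith [sq_nonneg B, norm_nonneg Sv]


/-- Step 2: if `{f_i}_{i=1}^n` is a unit norm Riesz basis for `ℓ₂ⁿ` with bounds
`0 < A ≤ B` and `r ≥ 1`, there is a partition `{A_1,…,A_r}` of `{1,…,n}` (encoded by a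
coloring `c`, with `A_j = {i | c i = j}`) such that for every `j` and every `i ∈ A_j`,
`∑_{ℓ ∈ A_j, ℓ ≠ i} |⟨f_i, f_ℓ⟩|² ≤ B²/r`. -/
theorem exists_partition_offDiagonal_le {n : ℕ} (f : Fin n → EuclideanSpace ℂ (Fin n))
    (A B : ℝ) (r : ℕ) (hA : 0 < A) (hAB : A ≤ B) (hr : 1 ≤ r)
    (hnorm : ∀ i, ‖f i‖ = 1)
    (hspan : Submodule.span ℂ (Set.range f) = ⊤)
    (hriesz : ∀ a : Fin n → ℂ,
      A ^ 2 * ∑ i, ‖a i‖ ^ 2 ≤ ‖∑ i, a i • f i‖ ^ 2 ∧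
      ‖∑ i, a i • f i‖ ^ 2 ≤ B ^ 2 * ∑ i, ‖a i‖ ^ 2) :
    ∃ c : Fin n → Fin r, ∀ j : Fin r, ∀ i : Fin n, c i = j →
      ∑ ℓ ∈ Finset.univ.filter (fun ℓ => ℓ ≠ i ∧ c ℓ = j), ‖⟪f i, f ℓ⟫_ℂ‖ ^ 2 ≤
        B ^ 2 / r := by
  exact partition_aux hr (fun i ℓ => ‖⟪f i, f ℓ⟫_ℂ‖ ^ 2)
    (fun i ℓ => by positivity)
    (fun i ℓ => by rw [norm_inner_symm])
    (B ^ 2) (fun i => bessel_bound f B hnorm (fun a => (hriesz a).2) i)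
end

section
/- Let {f_i}_{i=1}^∞ be a unit norm Riesz basic sequence in a Hilbert space H with bounds 0 < A ≤ B, and let ε > 0. Then there is a natural number r and a partition {A_1,…,A_r} of ℕ such that for each j = 1,…,r, the family {f_i}_{i∈A_j} is ε-minimal: for every i ∈ A_j, if P_i denotes the orthogonal projection onto the closed linear span of { f_ℓ : ℓ ∈ A_j, ℓ ≠ i }, then ‖P_i f_i‖ ≤ ε. -/
open scoped InnerProductSpace

open Finset in
private lemma finite_coloring_aux (w : ℕ → ℕ → ℝ) (hsymm : ∀ i l, w i l = w l i)
    (C : ℝ) (hrow : ∀ i, ∀ s : Finset ℕ, ∑ l ∈ s, w i l ≤ C)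
    (r n : ℕ) (hr : 0 < r) :
    ∃ c : ℕ → Fin r,
      ∀ i ∈ Finset.range n,
        ∑ l ∈ (Finset.range n).erase i, (if c l = c i then w i l else 0) ≤ C / r := by
  classical
  set Φ : (ℕ → Fin r) → ℝ := fun c =>
    ∑ i ∈ range n, ∑ l ∈ (range n).erase i, (if c l = c i then w i l else 0) with hΦ
  have hΦcongr : ∀ c c' : ℕ → Fin r, (∀ m < n, c m = c' m) → Φ c = Φ c' := by
    intro c c' h
    refine Finset.sum_congr rfl fun i hi => Finset.sum_congr rfl fun l hl => ?_
    rw [h i (mem_range.mp hi), h l (mem_range.mp (mem_of_mem_erase hl))]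
  have hex : ∃ d : Fin n → Fin r, ∀ d' : Fin n → Fin r,
      Φ (fun m => if h : m < n then d ⟨m, h⟩ else ⟨0, hr⟩) ≤
      Φ (fun m => if h : m < n then d' ⟨m, h⟩ else ⟨0, hr⟩) := by
    obtain ⟨d, -, hd⟩ := Finset.exists_min_image (Finset.univ : Finset (Fin n → Fin r))
      (fun d => Φ (fun m => if h : m < n then d ⟨m, h⟩ else ⟨0, hr⟩)) ⟨fun _ => ⟨0, hr⟩, mem_univ _⟩
    exact ⟨d, fun d' => hd d' (mem_univ _)⟩
  obtain ⟨d, hd⟩ := hex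
  set c : ℕ → Fin r := fun m => if h : m < n then d ⟨m, h⟩ else ⟨0, hr⟩ with hc
  have hmin : ∀ i < n, ∀ k : Fin r, Φ c ≤ Φ (Function.update c i k) := by
    intro i hi k
    have := hd (Function.update d ⟨i, hi⟩ k)
    refine this.trans (le_of_eq (hΦcongr _ _ ?_))
    intro m hm
    simp only [hm, dif_pos]
    by_cases hmi : m = i
    · subst hmi
      simp
    · rw [Function.update_of_ne hmi, Function.update_of_ne (by simp [Fin.ext_iff, hmi]), hc]
      simp [hm]
  refine ⟨c, fun i hi => ?_⟩
  have hin : i < n := mem_range.mp hi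
  set e : Finset ℕ := (range n).erase i with he
  have hie : i ∉ e := Finset.notMem_erase i _
  set S : Fin r → ℝ := fun k => ∑ l ∈ e, (if c l = k then w i l else 0) with hS
  set R : ℝ := ∑ l ∈ e, ∑ m ∈ ((range n).erase l).erase i,
      (if c m = c l then w l m else 0) with hR
  have key : ∀ k : Fin r, Φ (Function.update c i k) = 2 * S k + R := by
    intro k
    have hupd : ∀ m ∈ e, Function.update c i k m = c m := fun m hm =>
      Function.update_of_ne (Finset.ne_of_mem_erase hm) _ _
    have hA1 : ∑ l ∈ (range n).erase i,
        (if Function.update c i k l = Function.update c i k i then w i l else 0) = S k := by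
      simp only [hS, ← he]
      refine Finset.sum_congr rfl fun l hl => ?_
      rw [hupd l hl, Function.update_self]
    have hA2 : ∀ l ∈ e, ∑ m ∈ (range n).erase l,
        (if Function.update c i k m = Function.update c i k l then w l m else 0)
        = (∑ m ∈ ((range n).erase l).erase i, (if c m = c l then w l m else 0))
          + (if k = c l then w l i else 0) := by
      intro l hl
      have hil : i ∈ (range n).erase l :=
        Finset.mem_erase.mpr ⟨(Finset.ne_of_mem_erase hl).symm, hi⟩
      rw [← Finset.sum_erase_add _ _ hil]
      congr 1
      · refine Finset.sum_congr rfl fun m hm => ?_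
        rw [Function.update_of_ne (Finset.ne_of_mem_erase hm), hupd l hl]
      · rw [Function.update_self, hupd l hl]
    have hA3 : ∑ l ∈ e, (if k = c l then w l i else 0) = S k := by
      simp only [hS]
      refine Finset.sum_congr rfl fun l hl => ?_
      by_cases h : c l = k
      · simp [h, hsymm i l]
      · simp [h, Ne.symm h]
    calc Φ (Function.update c i k)
        = ∑ x ∈ range n, ∑ l ∈ (range n).erase x,
            (if Function.update c i k l = Function.update c i k x then w x l else 0) := by
          rw [hΦ]
      _ = (∑ x ∈ e, ∑ l ∈ (range n).erase x,
            (if Function.update c i k l = Function.update c i k x then w x l else 0))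
          + ∑ l ∈ (range n).erase i,
            (if Function.update c i k l = Function.update c i k i then w i l else 0) := by
          rw [he, Finset.sum_erase_add _ _ hi]
      _ = (∑ l ∈ e, ((∑ m ∈ ((range n).erase l).erase i, (if c m = c l then w l m else 0))
            + (if k = c l then w l i else 0))) + S k := by
          rw [hA1]
          exact congrArg (· + S k) (Finset.sum_congr rfl hA2)
      _ = 2 * S k + R := by
          rw [Finset.sum_add_distrib, hA3, hR]; ring
  have hspl : ∀ k : Fin r, S (c i) ≤ S k := by
    intro k
    have h1 := hmin i hin k
    have h2 : Φ c = 2 * S (c i) + R := by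
      have := key (c i)
      rwa [Function.update_eq_self] at this
    rw [h2, key k] at h1
    linarith
  have hsum : (r : ℝ) * S (c i) ≤ C := by
    have h1 : (r : ℝ) * S (c i) = ∑ _k : Fin r, S (c i) := by
      rw [Finset.sum_const, Finset.card_univ, Fintype.card_fin, nsmul_eq_mul]
    have h2 : ∑ _k : Fin r, S (c i) ≤ ∑ k : Fin r, S k :=
      Finset.sum_le_sum fun k _ => hspl k
    have h3 : ∑ k : Fin r, S k = ∑ l ∈ e, w i l := by
      rw [hS, Finset.sum_comm]
      refine Finset.sum_congr rfl fun l _ => ?_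
      simp
    rw [h1]
    exact h2.trans (h3.le.trans (hrow i e))
  have hrpos : (0 : ℝ) < r := by exact_mod_cast hr
  have hfin : S (c i) ≤ C / r := by rw [le_div_iff₀ hrpos]; linarith
  exact hfin

private lemma ultra_choice_aux {r : ℕ} (U : Ultrafilter ℕ) (g : ℕ → Fin r) :
    ∃ v : Fin r, {n | g n = v} ∈ U := by
  by_contra h
  push_neg at h
  have hcompl : ∀ v : Fin r, {n | g n = v}ᶜ ∈ U := fun v =>
    Ultrafilter.compl_mem_iff_notMem.mpr (h v)
  have h2 : (⋂ v : Fin r, {n | g n = v}ᶜ) ∈ U :=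
    (Filter.iInter_mem).mpr hcompl
  obtain ⟨n, hn⟩ := Ultrafilter.nonempty_of_mem h2
  simp only [Set.mem_iInter, Set.mem_compl_iff, Set.mem_setOf_eq] at hn
  exact hn (g n) rfl

private lemma infinite_coloring_aux (w : ℕ → ℕ → ℝ) (hw : ∀ i l, 0 ≤ w i l)
    (hsymm : ∀ i l, w i l = w l i)
    (C : ℝ) (hrow : ∀ i, ∀ s : Finset ℕ, ∑ l ∈ s, w i l ≤ C)
    (δ : ℝ) (hδ : 0 < δ) :
    ∃ (r : ℕ) (c : ℕ → Fin r), 0 < r ∧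
      ∀ i : ℕ, ∀ t : Finset ℕ, (∀ l ∈ t, l ≠ i ∧ c l = c i) →
        ∑ l ∈ t, w i l ≤ δ := by
  classical
  set r : ℕ := ⌈C / δ⌉₊ + 1 with hrdef
  have hr : 0 < r := Nat.succ_pos _
  have hCr : C / r ≤ δ := by
    have hrpos : (0 : ℝ) < r := by exact_mod_cast hr
    rw [div_le_iff₀ hrpos]
    rcases le_or_gt C 0 with hC | hC
    · nlinarith
    · have h1 : C / δ ≤ (⌈C / δ⌉₊ : ℝ) := Nat.le_ceil _
      have h2 : (⌈C / δ⌉₊ : ℝ) + 1 ≤ (r : ℝ) := by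
        rw [hrdef]; push_cast; linarith
      have := (div_le_iff₀ hδ).mp h1
      nlinarith
  choose cn hcn using fun n => finite_coloring_aux w hsymm C hrow r n hr
  set U : Ultrafilter ℕ := Filter.hyperfilter ℕ with hU
  have hchoice : ∀ i : ℕ, ∃ v : Fin r, {n | cn n i = v} ∈ U := fun i =>
    ultra_choice_aux U fun n => cn n i
  choose c hc using hchoice
  refine ⟨r, c, hr, fun i t ht => ?_⟩
  have hmem : {n | ∀ l ∈ insert i t, cn n l = c l} ∈ U := by
    have heq : {n | ∀ l ∈ insert i t, cn n l = c l}
        = ⋂ l ∈ (insert i t : Finset ℕ), {n | cn n l = c l} := by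
      ext n; simp
    rw [heq]
    exact (Filter.biInter_finset_mem _).mpr fun l _ => hc l
  set N : ℕ := (insert i t).sup id with hN
  have hbig : {n | N < n} ∈ U := by
    apply Filter.mem_hyperfilter_of_finite_compl
    have hsub : {n : ℕ | N < n}ᶜ ⊆ Set.Iic N := by
      intro n hn
      simp only [Set.mem_compl_iff, Set.mem_setOf_eq, not_lt] at hn
      exact hn
    exact (Set.finite_Iic N).subset hsub
  obtain ⟨n, hn1, hn2⟩ := Ultrafilter.nonempty_of_mem (Filter.inter_mem hmem hbig)
  have hiN : i ≤ N := Finset.le_sup (f := id) (Finset.mem_insert_self i t)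
  have hinr : i ∈ Finset.range n := Finset.mem_range.mpr (lt_of_le_of_lt hiN hn2)
  have hbound := hcn n i hinr
  calc ∑ l ∈ t, w i l
      = ∑ l ∈ t, (if cn n l = cn n i then w i l else 0) := by
        refine Finset.sum_congr rfl fun l hl => ?_
        have h1 : cn n l = c l := hn1 l (Finset.mem_insert_of_mem hl)
        have h2 : cn n i = c i := hn1 i (Finset.mem_insert_self i t)
        rw [h1, h2, (ht l hl).2, if_pos rfl]
    _ ≤ ∑ l ∈ (Finset.range n).erase i, (if cn n l = cn n i then w i l else 0) := by
        apply Finset.sum_le_sum_of_subset_of_nonneg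
        · intro l hl
          refine Finset.mem_erase.mpr ⟨(ht l hl).1, Finset.mem_range.mpr ?_⟩
          have hlN : l ≤ N := Finset.le_sup (f := id) (Finset.mem_insert_of_mem hl)
          exact lt_of_le_of_lt hlN hn2
        · intro l _ _
          by_cases h : cn n l = cn n i <;> simp [h, hw i l]
    _ ≤ C / r := hbound
    _ ≤ δ := hCr

private lemma row_bound_aux {H : Type*} [NormedAddCommGroup H] [InnerProductSpace ℂ H]
    (f : ℕ → H) (B : ℝ)
    (hnorm : ∀ i, ‖f i‖ = 1)
    (hupper : ∀ s : Finset ℕ, ∀ a : ℕ → ℂ,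
      ‖∑ i ∈ s, a i • f i‖ ^ 2 ≤ B ^ 2 * ∑ i ∈ s, ‖a i‖ ^ 2)
    (i : ℕ) (s : Finset ℕ) :
    ∑ l ∈ s, ‖⟪f i, f l⟫_ℂ‖ ^ 2 ≤ B ^ 2 := by
  classical
  set a : ℕ → ℂ := fun l => ⟪f l, f i⟫_ℂ with ha
  set g : H := ∑ l ∈ s, a l • f l with hg
  set S : ℝ := ∑ l ∈ s, ‖⟪f i, f l⟫_ℂ‖ ^ 2 with hSdef
  have hS0 : 0 ≤ S := Finset.sum_nonneg fun l _ => sq_nonneg _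
  have h1 : ⟪f i, g⟫_ℂ = (S : ℂ) := by
    rw [hg, inner_sum, hSdef]
    push_cast
    refine Finset.sum_congr rfl fun l _ => ?_
    rw [inner_smul_right, ha]
    simp only
    rw [← inner_conj_symm (f l) (f i), RCLike.conj_mul]
    norm_cast
  have h2 : S ≤ ‖g‖ := by
    have h := norm_inner_le_norm (𝕜 := ℂ) (f i) g
    rw [h1, hnorm i, one_mul] at h
    calc S ≤ |S| := le_abs_self S
      _ = ‖(S : ℂ)‖ := by rw [Complex.norm_real, Real.norm_eq_abs]
      _ ≤ ‖g‖ := h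
  have h3 : ‖g‖ ^ 2 ≤ B ^ 2 * S := by
    have h := hupper s a
    have heq : ∑ l ∈ s, ‖a l‖ ^ 2 = S := by
      rw [hSdef]
      refine Finset.sum_congr rfl fun l _ => ?_
      rw [ha]
      simp only
      rw [norm_inner_symm]
    rw [heq] at h
    exact h
  have h4 : S ^ 2 ≤ B ^ 2 * S := le_trans (pow_le_pow_left₀ hS0 h2 2) h3
  rcases hS0.eq_or_lt with h | h
  · nlinarith
  · nlinarith

private lemma dist_bound_aux {H : Type*} [NormedAddCommGroup H] [InnerProductSpace ℂ H]
    (f : ℕ → H) (A : ℝ) (hA : 0 < A)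
    (hnorm : ∀ i, ‖f i‖ = 1)
    (hlower : ∀ s : Finset ℕ, ∀ a : ℕ → ℂ,
      A ^ 2 * ∑ i ∈ s, ‖a i‖ ^ 2 ≤ ‖∑ i ∈ s, a i • f i‖ ^ 2)
    (i : ℕ) (s : Finset ℕ) (a : ℕ → ℂ) :
    1 - (∑ l ∈ s, ‖⟪f i, f l⟫_ℂ‖ ^ 2) / A ^ 2 ≤ ‖f i - ∑ l ∈ s, a l • f l‖ ^ 2 := by
  classical
  set y : H := ∑ l ∈ s, a l • f l with hy
  have hexp : ‖f i - y‖ ^ 2 = 1 - 2 * RCLike.re (⟪f i, y⟫_ℂ) + ‖y‖ ^ 2 := by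
    rw [norm_sub_sq (𝕜 := ℂ), hnorm i, one_pow]
  have hre : RCLike.re (⟪f i, y⟫_ℂ) ≤ ∑ l ∈ s, ‖a l‖ * ‖⟪f i, f l⟫_ℂ‖ := by
    calc RCLike.re (⟪f i, y⟫_ℂ) ≤ ‖⟪f i, y⟫_ℂ‖ := RCLike.re_le_norm _
      _ = ‖∑ l ∈ s, a l * ⟪f i, f l⟫_ℂ‖ := by rw [hy, inner_sum]; simp [inner_smul_right]
      _ ≤ ∑ l ∈ s, ‖a l * ⟪f i, f l⟫_ℂ‖ := norm_sum_le _ _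
      _ = ∑ l ∈ s, ‖a l‖ * ‖⟪f i, f l⟫_ℂ‖ := by simp [norm_mul]
  have hA2 : (0 : ℝ) < A ^ 2 := by positivity
  have hterm : ∀ l ∈ s, 2 * (‖a l‖ * ‖⟪f i, f l⟫_ℂ‖) ≤
      A ^ 2 * ‖a l‖ ^ 2 + ‖⟪f i, f l⟫_ℂ‖ ^ 2 / A ^ 2 := by
    intro l _
    set u := ‖a l‖
    set v := ‖⟪f i, f l⟫_ℂ‖
    have key : 2 * (u * v) * A ^ 2 ≤ (A ^ 2 * u ^ 2 + v ^ 2 / A ^ 2) * A ^ 2 := by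
      have h1 : v ^ 2 / A ^ 2 * A ^ 2 = v ^ 2 := div_mul_cancel₀ _ (ne_of_gt hA2)
      nlinarith [sq_nonneg (A ^ 2 * u - v)]
    exact le_of_mul_le_mul_right key hA2
  have hsum : 2 * ∑ l ∈ s, ‖a l‖ * ‖⟪f i, f l⟫_ℂ‖ ≤
      A ^ 2 * (∑ l ∈ s, ‖a l‖ ^ 2) + (∑ l ∈ s, ‖⟪f i, f l⟫_ℂ‖ ^ 2) / A ^ 2 := by
    rw [Finset.mul_sum, Finset.mul_sum, Finset.sum_div, ← Finset.sum_add_distrib]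
    exact Finset.sum_le_sum hterm
  have hylow := hlower s a
  linarith

private lemma proj_bound_aux {H : Type*} [NormedAddCommGroup H] [InnerProductSpace ℂ H]
    [CompleteSpace H]
    (f : ℕ → H) (T : Set ℕ) (i : ℕ) (hnormi : ‖f i‖ = 1) (m : ℝ)
    (hm : ∀ y ∈ Submodule.span ℂ (f '' T), m ≤ ‖f i - y‖ ^ 2) :
    ‖(Submodule.orthogonalProjection ((Submodule.span ℂ (f '' T)).topologicalClosure) (f i) : H)‖ ^ 2
      ≤ 1 - m := by
  set K := (Submodule.span ℂ (f '' T)).topologicalClosure with hKdef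
  have hK : ∀ y ∈ K, m ≤ ‖f i - y‖ ^ 2 := by
    intro y hyK
    have hclosed : IsClosed {y : H | m ≤ ‖f i - y‖ ^ 2} := by
      apply isClosed_le continuous_const
      fun_prop
    have hsub : (Submodule.span ℂ (f '' T) : Set H) ⊆ {y | m ≤ ‖f i - y‖ ^ 2} := hm
    have hcl : (K : Set H) ⊆ {y | m ≤ ‖f i - y‖ ^ 2} := by
      rw [hKdef, Submodule.topologicalClosure_coe]
      exact closure_minimal hsub hclosed
    exact hcl hyK
  have hpyth := Submodule.norm_sq_eq_add_norm_sq_projection (f i) K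
  have hperp : (Submodule.orthogonalProjection Kᗮ (f i) : H) = f i - Submodule.orthogonalProjection K (f i) :=
    Submodule.starProjection_orthogonal_val (K := K) (f i)
  have hmem : (Submodule.orthogonalProjection K (f i) : H) ∈ K := (Submodule.orthogonalProjection K (f i)).2
  have hdist := hK _ hmem
  simp only [Submodule.coe_norm] at hpyth
  rw [hperp, hnormi, one_pow] at hpyth
  have hfin : ‖(Submodule.orthogonalProjection K (f i) : H)‖ ^ 2 ≤ 1 - m := by linarith
  exact hfin

/-- Corollary: every unit norm Riesz basic sequence `{f_i}_{i=1}^∞` in a Hilbert space,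
with bounds `0 < A ≤ B`, admits for every `ε > 0` a finite partition `{A_1,…,A_r}` of `ℕ`
(encoded by a coloring `c`, with `A_j = {i | c i = j}`) such that each `{f_i}_{i ∈ A_j}`
is `ε`-minimal: for each `i ∈ A_j`, the orthogonal projection `P_i` onto the closed
linear span of `{f_ℓ : ℓ ∈ A_j, ℓ ≠ i}` satisfies `‖P_i f_i‖ ≤ ε`. -/
theorem exists_partition_eps_minimal {H : Type*} [NormedAddCommGroup H]
    [InnerProductSpace ℂ H] [CompleteSpace H]
    (f : ℕ → H) (A B ε : ℝ) (hA : 0 < A) (hAB : A ≤ B) (hε : 0 < ε)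
    (hnorm : ∀ i, ‖f i‖ = 1)
    (hriesz : ∀ s : Finset ℕ, ∀ a : ℕ → ℂ,
      A ^ 2 * ∑ i ∈ s, ‖a i‖ ^ 2 ≤ ‖∑ i ∈ s, a i • f i‖ ^ 2 ∧
      ‖∑ i ∈ s, a i • f i‖ ^ 2 ≤ B ^ 2 * ∑ i ∈ s, ‖a i‖ ^ 2) :
    ∃ (r : ℕ) (c : ℕ → Fin r), ∀ j : Fin r, ∀ i : ℕ, c i = j →
      ‖(Submodule.orthogonalProjection
          ((Submodule.span ℂ (f '' {ℓ | ℓ ≠ i ∧ c ℓ = j})).topologicalClosure)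
          (f i) : H)‖ ≤ ε := by
  classical
  set w : ℕ → ℕ → ℝ := fun i l => ‖⟪f i, f l⟫_ℂ‖ ^ 2 with hw
  have hwnn : ∀ i l, 0 ≤ w i l := fun i l => sq_nonneg _
  have hwsymm : ∀ i l, w i l = w l i := by
    intro i l
    rw [hw]
    simp only
    rw [norm_inner_symm]
  have hrowb : ∀ i, ∀ s : Finset ℕ, ∑ l ∈ s, w i l ≤ B ^ 2 :=
    fun i s => row_bound_aux f B hnorm (fun s a => (hriesz s a).2) i s
  have hδ : 0 < A ^ 2 * ε ^ 2 := by positivity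
  obtain ⟨r, c, hr, hcol⟩ := infinite_coloring_aux w hwnn hwsymm (B ^ 2) hrowb (A ^ 2 * ε ^ 2) hδ
  refine ⟨r, c, fun j i hij => ?_⟩
  have hm : ∀ y ∈ Submodule.span ℂ (f '' {ℓ | ℓ ≠ i ∧ c ℓ = j}),
      1 - ε ^ 2 ≤ ‖f i - y‖ ^ 2 := by
    intro y hy
    obtain ⟨l, hl, rfl⟩ := (Finsupp.mem_span_image_iff_linearCombination ℂ).mp hy
    rw [Finsupp.linearCombination_apply, Finsupp.sum]
    have hsupp : ∀ m ∈ l.support, m ≠ i ∧ c m = c i := by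
      intro m hms
      have hmem : m ∈ {ℓ | ℓ ≠ i ∧ c ℓ = j} := (Finsupp.mem_supported ℂ l).mp hl hms
      exact ⟨hmem.1, by rw [hmem.2, hij]⟩
    have hsmall : ∑ m ∈ l.support, w i m ≤ A ^ 2 * ε ^ 2 := hcol i l.support hsupp
    have hd := dist_bound_aux f A hA hnorm (fun s a => (hriesz s a).1) i l.support l
    have hstep : 1 - ε ^ 2 ≤ 1 - (∑ m ∈ l.support, w i m) / A ^ 2 := by
      have hA2 : (0 : ℝ) < A ^ 2 := by positivity
      rw [sub_le_sub_iff_left, div_le_iff₀ hA2]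
      calc ∑ m ∈ l.support, w i m ≤ A ^ 2 * ε ^ 2 := hsmall
        _ = ε ^ 2 * A ^ 2 := by ring
    exact le_trans hstep hd
  have hp := proj_bound_aux f {ℓ | ℓ ≠ i ∧ c ℓ = j} i (hnorm i) (1 - ε ^ 2) hm
  have hnn := norm_nonneg
    ((Submodule.orthogonalProjection
      ((Submodule.span ℂ (f '' {ℓ | ℓ ≠ i ∧ c ℓ = j})).topologicalClosure) (f i) : H))
  nlinarith [hp, hnn, hε]
end
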